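/- For the complete graph K_n^a on n ≥ 3 vertices with exactly one negative edge, the number of cycles of length k (3 ≤ k ≤ n) containing the negative edge is (n−2)!/(n−k)!, and the total number of k-cycles is n!/(2k(n−k)!). Hence the relative k-balance is D_k(K_n^a) = 1 − 2k/(n(n−1)). -/

import Mathlib

open SimpleGraph

namespace KBal

variable {V : Type*}

def mkW : (u v : V) → (l : List V) → (h : List.Chain' (· ≠ ·) (u :: (l ++ [v]))) →
    (⊤ : SimpleGraph V).Walk u v
  | u, v, [], h => SimpleGraph.Walk.cons (by simpa using (List.isChain_cons_cons.mp h).1) SimpleGraph.Walk.nil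
  | u, v, x :: xs, h =>
    SimpleGraph.Walk.cons (by simpa using (List.isChain_cons_cons.mp h).1)
      (mkW x v xs (List.isChain_cons_cons.mp h).2)

theorem support_mkW : ∀ (u v : V) (l : List V) (h),
    (mkW u v l h).support = u :: (l ++ [v])
  | u, v, [], h => by simp [mkW]
  | u, v, x :: xs, h => by simp [mkW]; exact support_mkW x v xs _

theorem edges_mkW : ∀ (u v : V) (l : List V) (h),
    (mkW u v l h).edges = List.zipWith (fun x y => s(x, y)) (u :: l) (l ++ [v])
  | u, v, [], h => by simp [mkW]
  | u, v, x :: xs, h => by simp [mkW]; exact edges_mkW x v xs _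

theorem length_mkW (u v : V) (l : List V) (h) : (mkW u v l h).length = l.length + 1 := by
  have := SimpleGraph.Walk.length_support (mkW u v l h)
  rw [support_mkW] at this
  simp at this
  omega

variable {n m : ℕ}

def LL (f : Fin (m + 3) ↪ Fin n) : List (Fin n) := List.ofFn ⇑f ++ [f 0]

lemma LL_def (f : Fin (m + 3) ↪ Fin n) : LL f = List.ofFn ⇑f ++ [f 0] := rfl

lemma cons_tail_ofFn (f : Fin (m + 3) ↪ Fin n) :
    f 0 :: (List.ofFn ⇑f).tail = List.ofFn ⇑f := by
  rw [List.ofFn_succ]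
  rfl

lemma LL_cons (f : Fin (m + 3) ↪ Fin n) :
    LL f = f 0 :: ((List.ofFn ⇑f).tail ++ [f 0]) := by
  rw [LL_def]
  conv_lhs => rw [← cons_tail_ofFn f]
  rfl

lemma LL_length (f : Fin (m + 3) ↪ Fin n) : (LL f).length = m + 4 := by simp [LL_def]

lemma LL_get (f : Fin (m + 3) ↪ Fin n) (i : ℕ) (h : i < m + 4) :
    (LL f)[i]'(by rw [LL_length]; exact h) = f ⟨i % (m + 3), Nat.mod_lt _ (by omega)⟩ := by
  rw [List.getElem_of_eq (LL_def f)]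
  by_cases hi : i < m + 3
  · rw [List.getElem_append_left (by simp; omega)]
    rw [List.getElem_ofFn]
    congr 1
    ext
    simp [Nat.mod_eq_of_lt hi]
  · have hieq : i = m + 3 := by omega
    subst hieq
    rw [List.getElem_append_right (by simp)]
    simp

lemma chain_LL (f : Fin (m + 3) ↪ Fin n) : List.Chain' (· ≠ ·) (LL f) := by
  refine List.isChain_iff_getElem.mpr ?_
  intro i hi
  rw [LL_length] at hi
  rw [LL_get f i (by omega), LL_get f (i + 1) (by omega)]
  intro hc
  have := f.injective hc
  rw [Fin.mk.injEq] at this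
  have h1 : i % (m + 3) = i := Nat.mod_eq_of_lt (by omega)
  rcases Nat.lt_or_ge (i + 1) (m + 3) with h2 | h2
  · rw [Nat.mod_eq_of_lt h2] at this; omega
  · have h3 : (i + 1) % (m + 3) = 0 := by
      have h4 : i + 1 = m + 3 := by omega
      simp [h4]
    omega

def walkOf (f : Fin (m + 3) ↪ Fin n) : Σ u : Fin n, (⊤ : SimpleGraph (Fin n)).Walk u u :=
  ⟨f 0, mkW (f 0) (f 0) ((List.ofFn ⇑f).tail) (by rw [← LL_cons]; exact chain_LL f)⟩

lemma support_walkOf (f : Fin (m + 3) ↪ Fin n) : (walkOf f).2.support = LL f := by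
  rw [walkOf, support_mkW, ← LL_cons]

lemma length_walkOf (f : Fin (m + 3) ↪ Fin n) : (walkOf f).2.length = m + 3 := by
  have := SimpleGraph.Walk.length_support (walkOf f).2
  rw [support_walkOf, LL_length] at this
  omega

lemma fin_succ_val (i : Fin (m + 3)) : (i + 1 : Fin (m + 3)).val = (i.val + 1) % (m + 3) := by
  simp [Fin.add_def, Fin.val_one]

lemma edges_walkOf (f : Fin (m + 3) ↪ Fin n) :
    (walkOf f).2.edges = List.ofFn (fun i : Fin (m + 3) => s(f i, f (i + 1))) := by
  rw [walkOf, edges_mkW]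
  apply List.ext_getElem
  · simp
  intro i h1 h2
  have hi : i < m + 3 := by simp at h2; omega
  rw [List.getElem_zipWith, List.getElem_ofFn]
  have e1 : (f 0 :: (List.ofFn ⇑f).tail)[i]'(by simp; omega) = f ⟨i, hi⟩ := by
    rw [List.getElem_of_eq (cons_tail_ofFn f), List.getElem_ofFn]
  have e2 : ((List.ofFn ⇑f).tail ++ [f 0])[i]'(by simp; omega) = f (⟨i, hi⟩ + 1) := by
    rw [List.getElem_of_eq (show (List.ofFn ⇑f).tail ++ [f 0] = (LL f).tail by rw [LL_cons, List.tail_cons])]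
    rw [List.getElem_tail, LL_get f (i + 1) (by omega)]
    exact congrArg f (Fin.ext (by rw [fin_succ_val]))
  exact congrArg₂ (fun x y => s(x, y)) e1 e2

lemma isCycle_walkOf (f : Fin (m + 3) ↪ Fin n) : (walkOf f).2.IsCycle := by
  rw [SimpleGraph.Walk.isCycle_def]
  refine ⟨⟨?_⟩, ?_, ?_⟩
  · -- edges nodup
    rw [edges_walkOf, List.nodup_ofFn]
    intro i j hc
    simp only [Sym2.eq, Sym2.rel_iff', Prod.mk.injEq, Prod.swap_prod_mk] at hc
    rcases hc with ⟨h1, _⟩ | ⟨h1, h2⟩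
    · exact f.injective h1
    · exfalso
      have hij : i = j + 1 := f.injective h1
      have hji : i + 1 = j := f.injective h2
      subst hij
      have h3 : ((j + 1) + 1 : Fin (m + 3)).val = j.val := congrArg Fin.val hji
      have h1v : ((j : Fin (m + 3)) + 1).val = (j.val + 1) % (m + 3) := fin_succ_val j
      have h2v : ((j + 1 : Fin (m + 3)) + 1).val = ((j + 1 : Fin (m + 3)).val + 1) % (m + 3) :=
        fin_succ_val _
      have hj := j.isLt
      by_cases hA : j.val + 1 < m + 3
      · rw [Nat.mod_eq_of_lt hA] at h1v
        rw [h1v] at h2v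
        by_cases hB : j.val + 1 + 1 < m + 3
        · rw [Nat.mod_eq_of_lt hB] at h2v; omega
        · have hB' : j.val + 1 + 1 = m + 3 := by omega
          rw [hB', Nat.mod_self] at h2v
          omega
      · have hA' : j.val + 1 = m + 3 := by omega
        rw [hA', Nat.mod_self] at h1v
        rw [h1v] at h2v
        have : (0 + 1) % (m + 3) = 1 := Nat.mod_eq_of_lt (by omega)
        rw [this] at h2v
        omega
  · -- ≠ nil
    intro hc
    have := length_walkOf f
    rw [hc] at this
    simp at this
  · -- support.tail nodup
    rw [support_walkOf, LL_cons, List.tail_cons]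
    rw [List.ofFn_succ, List.tail_cons]
    rw [List.nodup_append']
    refine ⟨?_, List.nodup_singleton _, ?_⟩
    · rw [List.nodup_ofFn]
      intro i j hc
      exact Fin.succ_injective _ (f.injective hc)
    · intro x hx
      simp only [List.mem_ofFn, Set.mem_range] at hx
      obtain ⟨i, rfl⟩ := hx
      simp only [List.mem_singleton]
      intro hc
      have := f.injective hc
      exact Fin.succ_ne_zero i this


theorem walk_start_eq {G : SimpleGraph V} {u v u' v' : V} (p : G.Walk u v) (q : G.Walk u' v')
    (h : p.support = q.support) : u = u' := by
  have h1 := p.support_eq_cons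
  have h2 := q.support_eq_cons
  rw [h1, h2] at h
  exact ((List.cons.injEq _ _ _ _).mp h).1

theorem walk_support_inj {G : SimpleGraph V} {u v : V} (p : G.Walk u v) :
    ∀ (q : G.Walk u v), p.support = q.support → p = q := by
  induction p with
  | nil =>
    intro q h
    cases q with
    | nil => rfl
    | cons h' q' => simp [SimpleGraph.Walk.support_cons] at h
  | cons hadj p ih =>
    intro q h
    cases q with
    | nil => simp [SimpleGraph.Walk.support_cons] at h
    | cons hadj' q' =>
      simp only [SimpleGraph.Walk.support_cons, List.cons.injEq, true_and] at h
      have hxy := walk_start_eq p q' h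
      subst hxy
      rw [ih q' h]

theorem sigma_walk_ext {G : SimpleGraph V} {u u' : V} (p : G.Walk u u) (q : G.Walk u' u')
    (h : p.support = q.support) : (⟨u, p⟩ : Σ w, G.Walk w w) = ⟨u', q⟩ := by
  have := walk_start_eq p q h
  subst this
  rw [walk_support_inj p q h]

lemma walkOf_inj : Function.Injective (walkOf : (Fin (m + 3) ↪ Fin n) → _) := by
  intro f g h
  have hs : LL f = LL g := by
    rw [← support_walkOf f, ← support_walkOf g]
    exact congrArg (fun p : Σ u : Fin n, (⊤ : SimpleGraph (Fin n)).Walk u u => p.2.support) h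
  rw [LL_def, LL_def] at hs
  have hof := List.append_inj_left hs (by simp)
  have hfg : ⇑f = ⇑g := List.ofFn_injective hof
  exact DFunLike.ext f g (fun i => congrFun hfg i)

lemma walkOf_surj (p : Σ u : Fin n, (⊤ : SimpleGraph (Fin n)).Walk u u)
    (hc : p.2.IsCycle) (hl : p.2.length = m + 3) :
    ∃ f : Fin (m + 3) ↪ Fin n, walkOf f = p := by
  obtain ⟨u, w⟩ := p
  simp only at hc hl
  have hsuplen : w.support.length = m + 4 := by
    rw [SimpleGraph.Walk.length_support, hl]
  have htnodup : w.support.tail.Nodup := ((SimpleGraph.Walk.isCycle_def _).mp hc).2.2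
  have htlen : w.support.tail.length = m + 3 := by
    simp [List.length_tail, hsuplen]
  have htne : w.support.tail ≠ [] := by
    intro h; rw [h] at htlen; simp at htlen
  have hsc := w.support_eq_cons
  set d := w.support.dropLast with hd
  have hdlen : d.length = m + 3 := by
    simp [hd, List.length_dropLast, hsuplen]
  have hdcons : d = u :: w.support.tail.dropLast := by
    rw [hd]
    conv_lhs => rw [hsc]
    rw [List.dropLast_cons_of_ne_nil htne]
  have hdecomp : d ++ [u] = w.support := by
    conv_rhs => rw [← List.dropLast_append_getLast (l := w.support) (by simp)]
    rw [w.getLast_support]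
  have htdecomp : w.support.tail.dropLast ++ [u] = w.support.tail := by
    have h3 : u :: (w.support.tail.dropLast ++ [u]) = u :: w.support.tail := by
      rw [← List.cons_append, ← hdcons, hdecomp, hsc]
      rfl
    exact (List.cons.injEq _ _ _ _).mp h3 |>.2
  have hdnodup : d.Nodup := by
    rw [hdcons, List.nodup_cons]
    constructor
    · intro hu
      have h2 : ¬ (w.support.tail.dropLast ++ [u]).Nodup := by
        rw [List.nodup_append']
        intro ⟨_, _, hdisj⟩
        exact hdisj hu (List.mem_singleton.mpr rfl)
      rw [htdecomp] at h2
      exact h2 htnodup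
    · exact (List.dropLast_sublist _).nodup htnodup
  -- build f
  have hinj : Function.Injective (fun i : Fin (m + 3) => d.get (Fin.cast hdlen.symm i)) := by
    intro i j hij
    have := List.nodup_iff_injective_get.mp hdnodup hij
    exact Fin.cast_injective _ this
  refine ⟨⟨fun i => d.get (Fin.cast hdlen.symm i), hinj⟩, ?_⟩
  have hf0 : d.get (Fin.cast hdlen.symm 0) = u := by
    simp only [List.get_eq_getElem, Fin.coe_cast, Fin.val_zero]
    rw [List.getElem_of_eq hdcons]
    simp
  have hofn : List.ofFn (fun i : Fin (m + 3) => d.get (Fin.cast hdlen.symm i)) = d := by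
    apply List.ext_getElem
    · simp [hdlen]
    intro i h1 h2
    rw [List.getElem_ofFn]
    simp [List.get_eq_getElem]
  have hsupp : (walkOf ⟨fun i => d.get (Fin.cast hdlen.symm i), hinj⟩).2.support = w.support := by
    rw [support_walkOf, LL_def]
    show List.ofFn (fun i : Fin (m + 3) => d.get (Fin.cast hdlen.symm i)) ++
      [d.get (Fin.cast hdlen.symm 0)] = w.support
    rw [hofn, hf0]
    exact hdecomp
  exact sigma_walk_ext _ _ hsupp

lemma card_walk_cond (cond : List (Sym2 (Fin n)) → Prop) :
    Nat.card {f : Fin (m + 3) ↪ Fin n // cond (walkOf f).2.edges} =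
      Nat.card {p : Σ u : Fin n, (⊤ : SimpleGraph (Fin n)).Walk u u //
        p.2.IsCycle ∧ p.2.length = m + 3 ∧ cond p.2.edges} := by
  apply Nat.card_eq_of_bijective
    (fun f => ⟨walkOf f.1, isCycle_walkOf f.1, length_walkOf f.1, f.2⟩)
  constructor
  · intro f g h
    exact Subtype.ext (walkOf_inj (congrArg Subtype.val h))
  · rintro ⟨p, hc, hl, hcond⟩
    obtain ⟨f, hf⟩ := walkOf_surj p hc hl
    exact ⟨⟨f, by rw [hf]; exact hcond⟩, Subtype.ext hf⟩

lemma fin_succ_ne (i : Fin (m + 3)) : i + 1 ≠ i := by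
  intro h
  have hv := congrArg Fin.val h
  rw [fin_succ_val] at hv
  have := i.isLt
  rcases Nat.lt_or_ge (i.val + 1) (m + 3) with h2 | h2
  · rw [Nat.mod_eq_of_lt h2] at hv; omega
  · have h3 : i.val + 1 = m + 3 := by omega
    rw [h3, Nat.mod_self] at hv; omega

lemma fin_succ_succ_ne (i : Fin (m + 3)) : i + 1 + 1 ≠ i := by
  intro h
  have h1v : ((i : Fin (m + 3)) + 1).val = (i.val + 1) % (m + 3) := fin_succ_val i
  have h2v : ((i + 1 : Fin (m + 3)) + 1).val = ((i + 1 : Fin (m + 3)).val + 1) % (m + 3) :=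
    fin_succ_val _
  have h3 := congrArg Fin.val h
  rw [h2v, h1v] at h3
  have hi := i.isLt
  by_cases hA : i.val + 1 < m + 3
  · rw [Nat.mod_eq_of_lt hA] at h3
    by_cases hB : i.val + 1 + 1 < m + 3
    · rw [Nat.mod_eq_of_lt hB] at h3; omega
    · have hB' : i.val + 1 + 1 = m + 3 := by omega
      rw [hB', Nat.mod_self] at h3; omega
  · have hA' : i.val + 1 = m + 3 := by omega
    rw [hA', Nat.mod_self] at h3
    have : (0 + 1) % (m + 3) = 1 := Nat.mod_eq_of_lt (by omega)
    rw [this] at h3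
    omega

def restrictEmb (i j : Fin (m + 3)) (x y : Fin n) :
    {f : Fin (m + 3) ↪ Fin n // f i = x ∧ f j = y} →
      ({z : Fin (m + 3) // z ≠ i ∧ z ≠ j} ↪ {w : Fin n // w ≠ x ∧ w ≠ y}) :=
  fun F => ⟨fun z => ⟨F.1 z.1,
      fun h => z.2.1 (F.1.injective (h.trans F.2.1.symm)),
      fun h => z.2.2 (F.1.injective (h.trans F.2.2.symm))⟩,
    fun z1 z2 h => Subtype.ext (F.1.injective (congrArg Subtype.val h))⟩

lemma restrictEmb_bijective (i j : Fin (m + 3)) (hij : i ≠ j) (x y : Fin n) (hxy : x ≠ y) :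
    Function.Bijective (restrictEmb i j x y) := by
  classical
  constructor
  · intro F1 F2 h
    apply Subtype.ext
    apply DFunLike.ext
    intro z
    rcases eq_or_ne z i with rfl | h1
    · rw [F1.2.1, F2.2.1]
    · rcases eq_or_ne z j with rfl | h2
      · rw [F1.2.2, F2.2.2]
      · exact congrArg (fun (e : {z : Fin (m + 3) // z ≠ i ∧ z ≠ j} ↪
          {w : Fin n // w ≠ x ∧ w ≠ y}) => (e ⟨z, h1, h2⟩).val) h
  · intro g
    have hinj : Function.Injective (fun z : Fin (m + 3) =>
        if hz : z = i then x else if hz' : z = j then y else (g ⟨z, hz, hz'⟩).val) := by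
      intro z1 z2 h
      dsimp only at h
      rcases eq_or_ne z1 i with rfl | h1
      · rw [dif_pos rfl] at h
        rcases eq_or_ne z2 z1 with rfl | h3
        · rfl
        · rcases eq_or_ne z2 j with rfl | h4
          · rw [dif_neg h3, dif_pos rfl] at h
            exact absurd h hxy
          · rw [dif_neg h3, dif_neg h4] at h
            exact absurd h.symm (g ⟨z2, h3, h4⟩).2.1
      · rcases eq_or_ne z1 j with rfl | h2
        · rw [dif_neg h1, dif_pos rfl] at h
          rcases eq_or_ne z2 i with rfl | h3
          · rw [dif_pos rfl] at h
            exact absurd h.symm hxy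
          · rcases eq_or_ne z2 z1 with rfl | h4
            · rfl
            · rw [dif_neg h3, dif_neg h4] at h
              exact absurd h.symm (g ⟨z2, h3, h4⟩).2.2
        · rw [dif_neg h1, dif_neg h2] at h
          rcases eq_or_ne z2 i with rfl | h3
          · rw [dif_pos rfl] at h
            exact absurd h (g ⟨z1, h1, h2⟩).2.1
          · rcases eq_or_ne z2 j with rfl | h4
            · rw [dif_neg h3, dif_pos rfl] at h
              exact absurd h (g ⟨z1, h1, h2⟩).2.2
            · rw [dif_neg h3, dif_neg h4] at h
              have := g.injective (Subtype.ext h)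
              exact congrArg Subtype.val this
    refine ⟨⟨⟨fun z => if hz : z = i then x else if hz' : z = j then y
        else (g ⟨z, hz, hz'⟩).val, hinj⟩, ?_, ?_⟩, ?_⟩
    · show (if hz : i = i then x else _) = x
      rw [dif_pos rfl]
    · show (if hz : j = i then x else if hz' : j = j then y else _) = y
      rw [dif_neg (Ne.symm hij), dif_pos rfl]
    · apply DFunLike.ext
      rintro ⟨z, hz1, hz2⟩
      apply Subtype.ext
      show (if hz : z = i then x else if hz' : z = j then y else (g ⟨z, hz, hz'⟩).val) = _
      rw [dif_neg hz1, dif_neg hz2]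

lemma card_subtype_two_ne (x y : Fin n) (hxy : x ≠ y) :
    Fintype.card {w : Fin n // w ≠ x ∧ w ≠ y} = n - 2 := by
  classical
  rw [Fintype.card_subtype]
  have h1 : (Finset.univ.filter fun w : Fin n => w ≠ x ∧ w ≠ y) =
      Finset.univ \ {x, y} := by
    ext w
    simp [Finset.mem_sdiff, not_or]
  rw [h1, Finset.card_sdiff_of_subset (by simp), Finset.card_univ, Fintype.card_fin,
    Finset.card_pair hxy]

lemma card_two_point (i j : Fin (m + 3)) (hij : i ≠ j) (x y : Fin n) (hxy : x ≠ y) :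
    Nat.card {f : Fin (m + 3) ↪ Fin n // f i = x ∧ f j = y} =
      (n - 2).descFactorial (m + 1) := by
  classical
  rw [Nat.card_eq_of_bijective _ (restrictEmb_bijective i j hij x y hxy)]
  rw [Nat.card_eq_fintype_card, Fintype.card_embedding_eq]
  rw [card_subtype_two_ne x y hxy]
  congr 1
  have : ({z : Fin (m + 3) // z ≠ i ∧ z ≠ j} : Type) = {w : Fin (m + 3) // w ≠ i ∧ w ≠ j} := rfl
  rw [show Fintype.card {z : Fin (m + 3) // z ≠ i ∧ z ≠ j} = (m + 3) - 2 from
    card_subtype_two_ne (n := m + 3) i j hij]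
  omega

lemma card_E (a b : Fin n) (hab : a ≠ b) :
    Nat.card {f : Fin (m + 3) ↪ Fin n // ∃ i : Fin (m + 3), s(a, b) = s(f i, f (i + 1))} =
      2 * (m + 3) * (n - 2).descFactorial (m + 1) := by
  classical
  rw [Nat.card_eq_fintype_card, Fintype.card_subtype]
  have hcov : (Finset.univ.filter fun f : Fin (m + 3) ↪ Fin n =>
      ∃ i, s(a, b) = s(f i, f (i + 1))) =
      Finset.univ.biUnion (fun p : Fin (m + 3) × Bool =>
        Finset.univ.filter fun f : Fin (m + 3) ↪ Fin n =>
          f p.1 = (if p.2 then a else b) ∧ f (p.1 + 1) = (if p.2 then b else a)) := by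
    ext f
    simp only [Finset.mem_filter, Finset.mem_biUnion, Finset.mem_univ, true_and]
    constructor
    · rintro ⟨i, hi⟩
      rw [Sym2.eq_iff] at hi
      rcases hi with ⟨h1, h2⟩ | ⟨h1, h2⟩
      · exact ⟨(i, true), by simp [h1.symm, h2.symm]⟩
      · exact ⟨(i, false), by simp [h1.symm, h2.symm]⟩
    · rintro ⟨⟨i, d⟩, hd⟩
      cases d
      · simp only [if_neg Bool.false_ne_true] at hd
        refine ⟨i, ?_⟩
        rw [Sym2.eq_iff]
        right
        exact ⟨hd.2.symm, hd.1.symm⟩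
      · simp only [if_pos rfl] at hd
        refine ⟨i, ?_⟩
        rw [Sym2.eq_iff]
        left
        exact ⟨hd.1.symm, hd.2.symm⟩
  rw [hcov]
  rw [Finset.card_biUnion]
  · have hone : ∀ p : Fin (m + 3) × Bool,
        (Finset.univ.filter fun f : Fin (m + 3) ↪ Fin n =>
          f p.1 = (if p.2 then a else b) ∧ f (p.1 + 1) = (if p.2 then b else a)).card =
        (n - 2).descFactorial (m + 1) := by
      intro p
      rw [← Fintype.card_subtype, ← Nat.card_eq_fintype_card]
      apply card_two_point p.1 (p.1 + 1) (Ne.symm (fin_succ_ne p.1))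
      cases hp : p.2
      · simp only [if_neg Bool.false_ne_true]
        exact Ne.symm hab
      · simp only [if_pos rfl]
        exact hab
    rw [Finset.sum_congr rfl (fun p _ => hone p), Finset.sum_const, smul_eq_mul,
      Finset.card_univ, Fintype.card_prod, Fintype.card_fin, Fintype.card_bool]
    ring
  · rintro ⟨i1, d1⟩ - ⟨i2, d2⟩ - hne
    rw [Function.onFun, Finset.disjoint_left]
    intro f hf1 hf2
    simp only [Finset.mem_filter, Finset.mem_univ, true_and] at hf1 hf2
    apply hne
    cases hd1 : d1 <;> cases hd2 : d2 <;> rw [hd1] at hf1 <;> rw [hd2] at hf2 <;>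
      simp only [if_pos rfl, if_neg Bool.false_ne_true] at hf1 hf2
    · have : i1 = i2 := f.injective (hf1.1.trans hf2.1.symm)
      simp [this]
    · exfalso
      have h1 : i2 + 1 = i1 := f.injective (hf2.2.trans hf1.1.symm)
      have h2 : i1 + 1 = i2 := f.injective (hf1.2.trans hf2.1.symm)
      rw [← h2] at h1
      exact fin_succ_succ_ne i1 h1
    · exfalso
      have h1 : i1 + 1 = i2 := f.injective (hf1.2.trans hf2.1.symm)
      have h2 : i2 + 1 = i1 := f.injective (hf2.2.trans hf1.1.symm)
      rw [← h1] at h2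
      exact fin_succ_succ_ne i1 h2
    · have : i1 = i2 := f.injective (hf1.1.trans hf2.1.symm)
      simp [this]

lemma mem_edges_iff (f : Fin (m + 3) ↪ Fin n) (a b : Fin n) :
    s(a, b) ∈ (walkOf f).2.edges ↔ ∃ i : Fin (m + 3), s(a, b) = s(f i, f (i + 1)) := by
  rw [edges_walkOf]
  simp only [List.mem_ofFn, Set.mem_range]
  exact exists_congr fun i => eq_comm

lemma card_all_walks :
    Nat.card {p : Σ u : Fin n, (⊤ : SimpleGraph (Fin n)).Walk u u //
      p.2.IsCycle ∧ p.2.length = m + 3} = n.descFactorial (m + 3) := by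
  have h2 : Nat.card {p : Σ u : Fin n, (⊤ : SimpleGraph (Fin n)).Walk u u //
      p.2.IsCycle ∧ p.2.length = m + 3} =
      Nat.card {p : Σ u : Fin n, (⊤ : SimpleGraph (Fin n)).Walk u u //
      p.2.IsCycle ∧ p.2.length = m + 3 ∧ True} :=
    Nat.card_congr (Equiv.subtypeEquivRight (fun p => by simp))
  rw [h2, ← card_walk_cond (fun _ => True)]
  rw [Nat.card_congr (Equiv.subtypeUnivEquiv (fun _ => trivial))]
  rw [Nat.card_eq_fintype_card, Fintype.card_embedding_eq, Fintype.card_fin, Fintype.card_fin]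

lemma card_mem_walks (a b : Fin n) (hab : a ≠ b) :
    Nat.card {p : Σ u : Fin n, (⊤ : SimpleGraph (Fin n)).Walk u u //
      p.2.IsCycle ∧ p.2.length = m + 3 ∧ s(a, b) ∈ p.2.edges} =
    2 * (m + 3) * (n - 2).descFactorial (m + 1) := by
  rw [← card_walk_cond (fun l => s(a, b) ∈ l)]
  rw [Nat.card_congr (Equiv.subtypeEquivRight (fun f => mem_edges_iff f a b))]
  exact card_E a b hab

lemma card_notmem_walks (a b : Fin n) (hab : a ≠ b) :
    Nat.card {p : Σ u : Fin n, (⊤ : SimpleGraph (Fin n)).Walk u u //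
      p.2.IsCycle ∧ p.2.length = m + 3 ∧ s(a, b) ∉ p.2.edges} =
    n.descFactorial (m + 3) - 2 * (m + 3) * (n - 2).descFactorial (m + 1) := by
  classical
  rw [← card_walk_cond (fun l => s(a, b) ∉ l)]
  rw [Nat.card_eq_fintype_card]
  rw [Fintype.card_subtype_compl]
  congr 1
  · rw [Fintype.card_embedding_eq, Fintype.card_fin, Fintype.card_fin]
  · rw [← Nat.card_eq_fintype_card]
    rw [Nat.card_congr (Equiv.subtypeEquivRight (fun f => mem_edges_iff f a b))]
    exact card_E a b hab

lemma card_le_walks (a b : Fin n) (hab : a ≠ b) :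
    2 * (m + 3) * (n - 2).descFactorial (m + 1) ≤ n.descFactorial (m + 3) := by
  classical
  have h := Fintype.card_subtype_le
    (fun f : Fin (m + 3) ↪ Fin n => s(a, b) ∈ (walkOf f).2.edges)
  rw [← Nat.card_eq_fintype_card,
    Nat.card_congr (Equiv.subtypeEquivRight (fun f => mem_edges_iff f a b)),
    card_E a b hab, Fintype.card_embedding_eq, Fintype.card_fin, Fintype.card_fin] at h
  exact h

end KBal

/-- In the complete graph on `n ≥ 3` vertices with exactly one negative edge `ab`,
counting `k`-cycles as closed cycle-walks (so each `k`-cycle subgraph is counted `2k`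
times, once for each starting point and direction): the number of `k`-cycles containing
the negative edge is `(n-2)!/(n-k)!`, the total number of `k`-cycles is `n!/(2k(n-k)!)`,
and hence the relative `k`-balance (the fraction of balanced `k`-cycles, those avoiding
the negative edge) is `1 - 2k/(n(n-1))`. -/
theorem kBalance_completeOneNegative (n k : ℕ) (hk : 3 ≤ k) (hkn : k ≤ n)
    (a b : Fin n) (hab : a ≠ b) :
    Nat.card {p : (u : Fin n) × (⊤ : SimpleGraph (Fin n)).Walk u u //
        p.2.IsCycle ∧ p.2.length = k} * Nat.factorial (n - k) = Nat.factorial n ∧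
    Nat.card {p : (u : Fin n) × (⊤ : SimpleGraph (Fin n)).Walk u u //
        p.2.IsCycle ∧ p.2.length = k ∧ s(a, b) ∈ p.2.edges} * Nat.factorial (n - k) =
      2 * k * Nat.factorial (n - 2) ∧
    (Nat.card {p : (u : Fin n) × (⊤ : SimpleGraph (Fin n)).Walk u u //
        p.2.IsCycle ∧ p.2.length = k ∧ s(a, b) ∉ p.2.edges} : ℚ) /
      (Nat.card {p : (u : Fin n) × (⊤ : SimpleGraph (Fin n)).Walk u u //
        p.2.IsCycle ∧ p.2.length = k}) = 1 - 2 * k / (n * (n - 1)) := by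
  obtain ⟨m, rfl⟩ : ∃ m, k = m + 3 := ⟨k - 3, by omega⟩
  have hA := KBal.card_all_walks (n := n) (m := m)
  have hB := KBal.card_mem_walks (n := n) (m := m) a b hab
  have hC := KBal.card_notmem_walks (n := n) (m := m) a b hab
  have hle := KBal.card_le_walks (n := n) (m := m) a b hab
  have hfact1 : (n - (m + 3)).factorial * n.descFactorial (m + 3) = n.factorial :=
    Nat.factorial_mul_descFactorial hkn
  have hfact2 : (n - (m + 3)).factorial * (n - 2).descFactorial (m + 1) = (n - 2).factorial := by
    have h2 : m + 1 ≤ n - 2 := by omega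
    have h3 : n - 2 - (m + 1) = n - (m + 3) := by omega
    have := Nat.factorial_mul_descFactorial h2
    rwa [h3] at this
  refine ⟨?_, ?_, ?_⟩
  · rw [hA, mul_comm]
    exact hfact1
  · rw [hB]
    calc 2 * (m + 3) * (n - 2).descFactorial (m + 1) * (n - (m + 3)).factorial
        = 2 * (m + 3) * ((n - (m + 3)).factorial * (n - 2).descFactorial (m + 1)) := by ring
      _ = 2 * (m + 3) * (n - 2).factorial := by rw [hfact2]
  · rw [hA, hC]
    set D := (n - 2).descFactorial (m + 1) with hD
    set A := n.descFactorial (m + 3) with hAdef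
    have e1 : (n - 1) * (n - 2).factorial = (n - 1).factorial := by
      have := Nat.mul_factorial_pred (n := n - 1) (by omega)
      rwa [show n - 1 - 1 = n - 2 by omega] at this
    have e2 : n * (n - 1).factorial = n.factorial := Nat.mul_factorial_pred (by omega)
    have hAD : A = n * (n - 1) * D := by
      apply Nat.eq_of_mul_eq_mul_left (Nat.factorial_pos (n - (m + 3)))
      rw [hfact1]
      rw [show (n - (m + 3)).factorial * (n * (n - 1) * D) =
        n * ((n - 1) * ((n - (m + 3)).factorial * D)) by ring]
      rw [hfact2, e1, e2]
    have hA0 : A ≠ 0 := by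
      rw [hAdef, Ne, Nat.descFactorial_eq_zero_iff_lt]
      omega
    have hAq0 : (A : ℚ) ≠ 0 := Nat.cast_ne_zero.mpr hA0
    have hsub : ((A - 2 * (m + 3) * D : ℕ) : ℚ) = (A : ℚ) - (2 * (m + 3) * D : ℕ) :=
      Nat.cast_sub hle
    rw [hsub, sub_div, div_self hAq0]
    have hnn0 : (n : ℚ) * ((n : ℚ) - 1) ≠ 0 := by
      have h1 : (n : ℚ) ≠ 0 := by
        simp only [ne_eq, Nat.cast_eq_zero]
        omega
      have h2 : (n : ℚ) - 1 ≠ 0 := by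
        intro h
        have : (n : ℚ) = 1 := by linarith
        have : n = 1 := by exact_mod_cast this
        omega
      exact mul_ne_zero h1 h2
    have hADq : (A : ℚ) = (n : ℚ) * ((n : ℚ) - 1) * (D : ℚ) := by
      have hc := congrArg (fun t : ℕ => (t : ℚ)) hAD
      push_cast [Nat.cast_sub (show 1 ≤ n by omega)] at hc
      exact hc
    congr 1
    rw [div_eq_div_iff hAq0 hnn0]
    push_cast
    rw [hADq]
    ring
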